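/- Let L and L' be grids in R^d. If L ∩ L' is not contained in any affine hyperplane of R^d, then L and L' are commensurable. -/

import Mathlib

/-- A full-rank lattice in ℝ^d: the ℤ-span of an ℝ-basis of ℝ^d. -/
def IsLattice {d : ℕ} (Λ : Set (Fin d → ℝ)) : Prop :=
  ∃ b : Module.Basis (Fin d) ℝ (Fin d → ℝ),
    Λ = (Submodule.span ℤ (Set.range ⇑b) : Set (Fin d → ℝ))

/-- A grid in ℝ^d: a translate of a full-rank lattice. -/
def IsGrid {d : ℕ} (L : Set (Fin d → ℝ)) : Prop :=
  ∃ (v : Fin d → ℝ) (Λ : Set (Fin d → ℝ)), IsLattice Λ ∧ L = (fun x => v + x) '' Λ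

/-- Two grids `L`, `L'` are commensurable if there exist `δ > 0` and `v` such that
`L ∩ (δ L' + v)` is a grid. -/
def GridCommensurable {d : ℕ} (L L' : Set (Fin d → ℝ)) : Prop :=
  ∃ δ : ℝ, 0 < δ ∧ ∃ v : Fin d → ℝ, IsGrid (L ∩ ((fun x => δ • x + v) '' L'))

open Submodule Module

/-- If the intersection of two grids is not contained in any affine hyperplane, then
the grids are commensurable. -/
theorem commensurable_of_not_subset_hyperplane (d : ℕ) (L L' : Set (Fin d → ℝ))
    (hL : IsGrid L) (hL' : IsGrid L')
    (h : ¬ ∃ (n : Fin d → ℝ) (c : ℝ), n ≠ 0 ∧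
        L ∩ L' ⊆ {x : Fin d → ℝ | (∑ i, x i * n i) = c}) :
    GridCommensurable L L' := by
  classical
  obtain ⟨v, Λ₀, ⟨b, hb⟩, hLdef⟩ := hL
  obtain ⟨v', Λ₀', ⟨b', hb'⟩, hL'def⟩ := hL'
  set Λ : Submodule ℤ (Fin d → ℝ) := span ℤ (Set.range ⇑b) with hΛ
  set Λ' : Submodule ℤ (Fin d → ℝ) := span ℤ (Set.range ⇑b') with hΛ'
  have hLeq : L = (fun x => v + x) '' (Λ : Set (Fin d → ℝ)) := by rw [hLdef, hb]
  have hL'eq : L' = (fun x => v' + x) '' (Λ' : Set (Fin d → ℝ)) := by rw [hL'def, hb']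
  set S : Set (Fin d → ℝ) := L ∩ L' with hS
  -- membership characterizations
  have memL : ∀ x, x ∈ L ↔ x - v ∈ Λ := by
    intro x
    rw [hLeq]
    constructor
    · rintro ⟨y, hy, rfl⟩; simpa using hy
    · intro hx; exact ⟨x - v, hx, by ring⟩
  have memL' : ∀ x, x ∈ L' ↔ x - v' ∈ Λ' := by
    intro x
    rw [hL'eq]
    constructor
    · rintro ⟨y, hy, rfl⟩; simpa using hy
    · intro hx; exact ⟨x - v', hx, by ring⟩
  -- key step: S contains a point q0 and the differences span ℝ^d
  have key : ∃ q0 ∈ S, span ℝ ((fun x => x - q0) '' S) = ⊤ := by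
    rcases eq_or_ne d 0 with hd | hd
    · subst hd
      have h0 : (v : Fin 0 → ℝ) ∈ S := by
        constructor
        · rw [memL]; simpa using Λ.zero_mem
        · rw [memL']
          have : v - v' = (0 : Fin 0 → ℝ) := Subsingleton.elim _ _
          rw [this]; exact Λ'.zero_mem
      exact ⟨v, h0, Subsingleton.elim _ _⟩
    · by_contra hcon
      push_neg at hcon
      apply h
      rcases Set.eq_empty_or_nonempty S with hSe | ⟨q0, hq0⟩
      · refine ⟨Pi.single ⟨0, Nat.pos_of_ne_zero hd⟩ 1, 0, ?_, by simp [hSe]⟩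
        intro h0
        have := congrFun h0 ⟨0, Nat.pos_of_ne_zero hd⟩
        simp at this
      · have hlt : span ℝ ((fun x => x - q0) '' S) < ⊤ :=
          lt_top_iff_ne_top.mpr (hcon q0 hq0)
        obtain ⟨f, hf0, hfmap⟩ :=
          Submodule.exists_dual_map_eq_bot_of_lt_top hlt inferInstance
        have hfx : ∀ x : Fin d → ℝ, f x = ∑ i, x i * f (Pi.single i 1) := by
          intro x
          rw [LinearMap.pi_apply_eq_sum_univ f x]
          refine Finset.sum_congr rfl fun i _ => ?_
          rw [smul_eq_mul]
          congr 1
          congr 1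
          ext j
          simp [Pi.single_apply, eq_comm]
        refine ⟨fun i => f (Pi.single i 1), f q0, ?_, ?_⟩
        · intro hn
          apply hf0
          refine LinearMap.ext fun x => ?_
          rw [hfx x]
          simp only [LinearMap.zero_apply]
          have : ∀ i, f (Pi.single i 1) = 0 := fun i => congrFun hn i
          simp [this]
        · intro x hx
          have hmem : x - q0 ∈ span ℝ ((fun x => x - q0) '' S) :=
            subset_span ⟨x, hx, rfl⟩
          have : f (x - q0) = 0 := by
            have := hfmap ▸ Submodule.mem_map_of_mem (f := f) hmem
            simpa using this
          rw [map_sub] at this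
          have hfq : f x = f q0 := by linarith
          show (∑ i, x i * f (Pi.single i 1)) = f q0
          rw [← hfx x, hfq]
  obtain ⟨q0, hq0, hspanS⟩ := key
  set N : Submodule ℤ (Fin d → ℝ) := Λ ⊓ Λ' with hN
  -- S = q0 + N
  have hq0Λ : q0 - v ∈ Λ := (memL q0).mp hq0.1
  have hq0Λ' : q0 - v' ∈ Λ' := (memL' q0).mp hq0.2
  have hSeq : S = (fun x => q0 + x) '' (N : Set (Fin d → ℝ)) := by
    ext x
    constructor
    · rintro ⟨hx1, hx2⟩
      refine ⟨x - q0, ⟨?_, ?_⟩, by ring⟩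
      · have : x - q0 = (x - v) - (q0 - v) := by ring
        rw [this]; exact Λ.sub_mem ((memL x).mp hx1) hq0Λ
      · have : x - q0 = (x - v') - (q0 - v') := by ring
        rw [this]; exact Λ'.sub_mem ((memL' x).mp hx2) hq0Λ'
    · rintro ⟨y, ⟨hy1, hy2⟩, rfl⟩
      constructor
      · rw [memL]
        have : q0 + y - v = (q0 - v) + y := by ring
        rw [this]; exact Λ.add_mem hq0Λ hy1
      · rw [memL']
        have : q0 + y - v' = (q0 - v') + y := by ring
        rw [this]; exact Λ'.add_mem hq0Λ' hy2
  -- N spans ℝ^d over ℝ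
  have hspanN : span ℝ (N : Set (Fin d → ℝ)) = ⊤ := by
    rw [eq_top_iff, ← hspanS]
    apply span_le.mpr
    rintro _ ⟨x, hx, rfl⟩
    apply subset_span
    have : x - q0 ∈ N := by
      rcases (hSeq ▸ hx : x ∈ _) with ⟨y, hy, rfl⟩
      simpa using hy
    exact this
  -- N is discrete
  have hdisc : DiscreteTopology N := by
    have : DiscreteTopology Λ := inferInstance
    exact DiscreteTopology.of_subset this (SetLike.coe_subset_coe.mpr inf_le_left)
  have hzl : IsZLattice ℝ N := ⟨hspanN⟩
  have hfin : Module.Finite ℤ N := ZLattice.module_finite ℝ N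
  have hfree : Module.Free ℤ N := ZLattice.module_free ℝ N
  set b0 := Module.Free.chooseBasis ℤ N with hb0
  have hcard : Fintype.card (Module.Free.ChooseBasisIndex ℤ N) = d := by
    rw [← Module.finrank_eq_card_chooseBasisIndex, ZLattice.rank ℝ N,
      Module.finrank_fin_fun]
  set e := Fintype.equivFinOfCardEq hcard with he
  set bR : Basis (Fin d) ℝ (Fin d → ℝ) := (b0.ofZLatticeBasis ℝ N).reindex e with hbR
  have hspanbR : span ℤ (Set.range ⇑bR) = N := by
    rw [hbR, Basis.range_reindex, Basis.ofZLatticeBasis_span]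
  -- conclude
  refine ⟨1, one_pos, 0, ?_⟩
  have himg : (fun x => (1 : ℝ) • x + 0) '' L' = L' := by
    simp [Set.image_id']
  rw [himg]
  exact ⟨q0, N, ⟨bR, by rw [hspanbR]⟩, hSeq⟩
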